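/- (Siegel's counting lemma, abstract form.) Let Ω: {n ≥ 2} → [1,∞) be any nondecreasing function and fix η ≥ 1, s ≥ 1 and eigenvalue data such that for multiindices k > k′ with E_k, E_{k′} > ηΩ(n) one has |k − k′| ≥ n. Define Δ_k by Δ_e = 1 for |e| = 1 and Δ_k = E_k max_{k_1+⋯+k_r = k, r = |l| ≥ 2} Δ_{k_1}⋯Δ_{k_r}, and let N_n(k) be the number of factors E_{l_i} exceeding ηΩ(n) in the resulting product decomposition Δ_k = E_{l_0} E_{l_1}⋯E_{l_t}. Then N_n(k) = 0 if |k| ≤ n, and N_n(k) ≤ 2|k|/n − 1 if |k| > n. -/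

import Mathlib

/-- Decomposition trees recording the canonical recursive decomposition
`Δ_k = E_k · Δ_{k₁} ⋯ Δ_{k_r}` of the small-divisor products: a leaf carries a
multiindex of length 1 (where `Δ_e = 1`), and a node carries a multiindex `k`
together with the subtrees for the parts `k₁, …, k_r` of the chosen
decomposition `k = k₁ + ⋯ + k_r`, `r ≥ 2`. -/
inductive DecompTree (s : ℕ) : Type
  | leaf : (Fin s → ℕ) → DecompTree s
  | node : (Fin s → ℕ) → List (DecompTree s) → DecompTree s

namespace DecompTree

variable {s : ℕ}

/-- The multiindex at the root of the tree. -/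
def root : DecompTree s → (Fin s → ℕ)
  | leaf k => k
  | node k _ => k

/-- The multiindices `l₀, l₁, …, l_t` of the factors `E_{l_i}` appearing in the
product decomposition `Δ_k = E_{l₀} E_{l₁} ⋯ E_{l_t}` recorded by the tree
(leaves contribute no factor, since `Δ_e = 1`). -/
def factors : DecompTree s → List (Fin s → ℕ)
  | leaf _ => []
  | node k ts => k :: ts.attach.flatMap (fun t => factors t.1)
  decreasing_by
    have := List.sizeOf_lt_of_mem t.2
    simp only [DecompTree.node.sizeOf_spec]
    omega

/-- A tree is a valid decomposition tree if leaves carry multiindices of length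
one, and each node has at least two children whose roots sum to the node's
multiindex. -/
def Valid : DecompTree s → Prop
  | leaf k => (∑ i, k i) = 1
  | node k ts => 2 ≤ ts.length ∧ (ts.map root).sum = k ∧ ∀ t ∈ ts.attach, Valid t.1
  decreasing_by
    have := List.sizeOf_lt_of_mem t.2
    simp only [DecompTree.node.sizeOf_spec]
    omega

end DecompTree

section SiegelAux

open DecompTree

variable {s : ℕ}

private lemma list_sum_apply (l : List (Fin s → ℕ)) (i : Fin s) :
    l.sum i = (l.map (fun k => k i)).sum := by
  induction l with
  | nil => rfl
  | cons a l ih => simp [ih]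

private lemma sum_list_sum (l : List (Fin s → ℕ)) :
    ∑ i, l.sum i = (l.map (fun f => ∑ i, f i)).sum := by
  induction l with
  | nil => simp
  | cons a l ih => simp [Finset.sum_add_distrib, ih]

private lemma countP_flatMap (p : (Fin s → ℕ) → Bool) (f : DecompTree s → List (Fin s → ℕ)) :
    ∀ l : List (DecompTree s),
      (l.flatMap f).countP p = (l.map fun a => (f a).countP p).sum := by
  intro l
  induction l with
  | nil => rfl
  | cons a l ih => simp [List.countP_append, ih]

private lemma flatMap_attach (l : List (DecompTree s)) (f : DecompTree s → List (Fin s → ℕ)) :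
    l.attach.flatMap (fun t => f t.1) = l.flatMap f := by
  conv_rhs => rw [← List.attach_map_subtype_val l, List.flatMap_map]

private lemma lt_sum_of_mem {l : List ℕ} (h1 : ∀ x ∈ l, 1 ≤ x) (h2 : 2 ≤ l.length)
    {a : ℕ} (ha : a ∈ l) : a < l.sum := by
  have hperm : List.Perm l (a :: l.erase a) := List.perm_cons_erase ha
  have hsum : l.sum = a + (l.erase a).sum := by
    rw [hperm.sum_eq]; simp
  have hlen : 1 ≤ (l.erase a).length := by
    have := l.length_erase_of_mem ha
    omega
  have h1' : ∀ x ∈ l.erase a, 1 ≤ x := fun x hx => h1 x (List.mem_of_mem_erase hx)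
  have := List.length_le_sum_of_one_le _ h1'
  omega

/-- The package of facts proved by induction over decomposition trees:
`C` is the number of maximal counted nodes, `T` the sum of their sizes. -/
private def SiegelP (E : (Fin s → ℕ) → ℝ) (Ω : ℕ → ℝ) (η : ℝ) (n : ℕ)
    (t : DecompTree s) : Prop :=
  ∃ C T : ℕ,
    1 ≤ ∑ i, t.root i ∧
    T ≤ ∑ i, t.root i ∧
    (C = 0 → T = 0) ∧
    ((∑ i, t.root i) ≤ n → T = 0) ∧
    (∀ K : Fin s → ℕ, (∀ i, t.root i ≤ K i) → t.root ≠ K → η * Ω n < E K →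
      T ≤ C * ((∑ i, K i) - n)) ∧
    n * ((t.factors.countP fun l => decide (η * Ω n < E l)) + C) ≤ 2 * T

private lemma siegel_agg (E : (Fin s → ℕ) → ℝ) (Ω : ℕ → ℝ) (η : ℝ) (n : ℕ)
    (ts : List (DecompTree s)) (h : ∀ t ∈ ts, SiegelP E Ω η n t) :
    ∃ c T' : ℕ,
      T' ≤ (ts.map (fun t => ∑ i, t.root i)).sum ∧
      (c = 0 → T' = 0) ∧
      ((∀ t ∈ ts, (∑ i, t.root i) ≤ n) → T' = 0) ∧
      (∀ K : Fin s → ℕ, (∀ t ∈ ts, (∀ i, t.root i ≤ K i) ∧ t.root ≠ K) →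
        η * Ω n < E K → T' ≤ c * ((∑ i, K i) - n)) ∧
      n * (((ts.flatMap factors).countP fun l => decide (η * Ω n < E l)) + c) ≤ 2 * T' := by
  induction ts with
  | nil => exact ⟨0, 0, by simp, by simp, by simp, by simp, by simp⟩
  | cons a ts ih =>
      obtain ⟨C, T, -, hT, hC0, hTn, hK, hmain⟩ := h a List.mem_cons_self
      obtain ⟨c, T', hT', hc0, hT'n, hK', hmain'⟩ := ih (fun t ht => h t (List.mem_cons_of_mem a ht))
      refine ⟨C + c, T + T', ?_, ?_, ?_, ?_, ?_⟩
      · simp only [List.map_cons, List.sum_cons]; omega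
      · intro h0
        have := hC0 (by omega)
        have := hc0 (by omega)
        omega
      · intro hall
        have := hTn (hall a List.mem_cons_self)
        have := hT'n (fun t ht => hall t (List.mem_cons_of_mem a ht))
        omega
      · intro K hall hEK
        have h1 := hK K (hall a List.mem_cons_self).1 (hall a List.mem_cons_self).2 hEK
        have h2 := hK' K (fun t ht => hall t (List.mem_cons_of_mem a ht)) hEK
        calc T + T' ≤ C * ((∑ i, K i) - n) + c * ((∑ i, K i) - n) := by omega
          _ = (C + c) * ((∑ i, K i) - n) := (add_mul _ _ _).symm
      · rw [List.flatMap_cons, List.countP_append]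
        set Na := (a.factors.countP fun l => decide (η * Ω n < E l)) with hNa
        set Nr := ((ts.flatMap factors).countP fun l => decide (η * Ω n < E l)) with hNr
        have e : n * (Na + Nr + (C + c)) = n * (Na + C) + n * (Nr + c) := by ring
        omega

private theorem siegel_key (E : (Fin s → ℕ) → ℝ) (Ω : ℕ → ℝ) (η : ℝ) (n : ℕ)
    (hn : 2 ≤ n)
    (hΩ1 : ∀ m, 2 ≤ m → 1 ≤ Ω m)
    (hΩmono : ∀ m m', 2 ≤ m → m ≤ m' → Ω m ≤ Ω m')
    (hη : 1 ≤ η)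
    (hE : ∀ k : Fin s → ℕ, 2 ≤ ∑ i, k i → E k ≤ Ω (∑ i, k i))
    (hsep : ∀ k k' : Fin s → ℕ, (∀ i, k' i ≤ k i) → k' ≠ k →
      η * Ω n < E k → η * Ω n < E k' → n ≤ (∑ i, k i) - (∑ i, k' i))
    (t : DecompTree s) (hv : t.Valid) : SiegelP E Ω η n t := by
  match t with
  | .leaf k =>
      rw [Valid] at hv
      refine ⟨0, 0, ?_, ?_, ?_, ?_, ?_, ?_⟩
      · simp [root, hv]
      · simp
      · simp
      · simp
      · simp
      · rw [factors]; simp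
  | .node k ts =>
      rw [Valid] at hv
      obtain ⟨hlen, hsum, hval⟩ := hv
      have hrec : ∀ t' ∈ ts, SiegelP E Ω η n t' := by
        intro t' ht'
        exact siegel_key E Ω η n hn hΩ1 hΩmono hη hE hsep t'
          (hval ⟨t', ht'⟩ (List.mem_attach _ _))
      obtain ⟨c, T', hT'le, hc0, hT'n, hKcl, hmain⟩ := siegel_agg E Ω η n ts hrec
      -- basic size facts
      have hroot : root (DecompTree.node k ts) = k := rfl
      have hS : ∑ i, k i = (ts.map (fun t => ∑ i, t.root i)).sum := by
        conv_lhs => rw [← hsum]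
        rw [sum_list_sum, List.map_map]
        rfl
      have hone : ∀ t' ∈ ts, 1 ≤ ∑ i, t'.root i := by
        intro t' ht'
        obtain ⟨C, T, h1, -⟩ := hrec t' ht'
        exact h1
      have hone' : ∀ x ∈ ts.map (fun t => ∑ i, t.root i), 1 ≤ x := by
        intro x hx
        obtain ⟨t', ht', rfl⟩ := List.mem_map.1 hx
        exact hone t' ht'
      have hSk2 : 2 ≤ ∑ i, k i := by
        rw [hS]
        calc 2 ≤ ts.length := hlen
          _ = (ts.map (fun t => ∑ i, t.root i)).length := (List.length_map _).symm
          _ ≤ _ := List.length_le_sum_of_one_le _ hone'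
      have hchild_le : ∀ t' ∈ ts, ∀ i, t'.root i ≤ k i := by
        intro t' ht' i
        conv_rhs => rw [← hsum]
        rw [list_sum_apply, List.map_map]
        exact List.single_le_sum (fun x _ => Nat.zero_le x) _
          (List.mem_map_of_mem ht')
      have hchild_lt : ∀ t' ∈ ts, (∑ i, t'.root i) < ∑ i, k i := by
        intro t' ht'
        rw [hS]
        refine lt_sum_of_mem hone' (by rw [List.length_map]; exact hlen)
          (List.mem_map_of_mem ht')
      have hchild_ne : ∀ t' ∈ ts, t'.root ≠ k := by
        intro t' ht' he
        have := hchild_lt t' ht'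
        rw [he] at this
        omega
      have hfac : factors (DecompTree.node k ts) = k :: ts.flatMap factors := by
        rw [factors, flatMap_attach]
      by_cases hcnt : η * Ω n < E k
      · -- root counted
        have hSkn : n < ∑ i, k i := by
          by_contra hle
          push_neg at hle
          have h1 : E k ≤ Ω (∑ i, k i) := hE k hSk2
          have h2 : Ω (∑ i, k i) ≤ Ω n := hΩmono _ _ hSk2 hle
          have h3 : (0:ℝ) ≤ Ω n := le_trans zero_le_one (hΩ1 n hn)
          nlinarith
        refine ⟨1, ∑ i, k i, ?_, ?_, by omega, ?_, ?_, ?_⟩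
        · show 1 ≤ ∑ i, root (DecompTree.node k ts) i
          rw [hroot]; omega
        · show (∑ i, k i) ≤ ∑ i, root (DecompTree.node k ts) i
          rw [hroot]
        · show (∑ i, root (DecompTree.node k ts) i) ≤ n → (∑ i, k i) = 0
          rw [hroot]; omega
        · intro K hle hne hEK
          have h1 := hsep K k (by rw [hroot] at hle; exact hle) (by rw [hroot] at hne; exact hne) hEK hcnt
          have h2 : (∑ i, k i) ≤ ∑ i, K i := by
            rw [hroot] at hle
            exact Finset.sum_le_sum (fun i _ => hle i)
          omega
        · show n * ((factors (DecompTree.node k ts)).countP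
              (fun l => decide (η * Ω n < E l)) + 1) ≤ 2 * ∑ i, k i
          have hcount : (factors (DecompTree.node k ts)).countP
              (fun l => decide (η * Ω n < E l))
              = ((ts.flatMap factors).countP fun l => decide (η * Ω n < E l)) + 1 := by
            rw [hfac, List.countP_cons]
            simp [hcnt]
          rw [hcount]
          set Nr := ((ts.flatMap factors).countP fun l => decide (η * Ω n < E l)) with hNr
          have hKch : T' ≤ c * ((∑ i, k i) - n) :=
            hKcl k (fun t' ht' => ⟨hchild_le t' ht', hchild_ne t' ht'⟩) hcnt
          have hT'S : T' ≤ ∑ i, k i := by rw [hS]; exact hT'le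
          -- goal: n * (Nr + 1 + 1) ≤ 2 * ∑ i, k i
          match c with
          | 0 =>
              have hT0 : T' = 0 := hc0 rfl
              have : n * (Nr + 0) = 0 := by omega
              have hNr0 : Nr = 0 := by
                rcases Nat.mul_eq_zero.1 (by omega : n * (Nr + 0) = 0) with h | h
                · omega
                · omega
              simp only [hNr0]
              omega
          | 1 =>
              have e1 : n * (Nr + 1) = n * Nr + n := by ring
              have e2 : n * (Nr + 1 + 1) = n * Nr + 2 * n := by ring
              omega
          | (c + 2) =>
              have e1 : n * (Nr + (c + 2)) = n * Nr + n * c + 2 * n := by ring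
              have e2 : n * (Nr + 1 + 1) = n * Nr + 2 * n := by ring
              omega
      · -- root not counted
        refine ⟨c, T', ?_, ?_, hc0, ?_, ?_, ?_⟩
        · show 1 ≤ ∑ i, root (DecompTree.node k ts) i
          rw [hroot]; omega
        · show T' ≤ ∑ i, root (DecompTree.node k ts) i
          rw [hroot, hS]; exact hT'le
        · show (∑ i, root (DecompTree.node k ts) i) ≤ n → T' = 0
          rw [hroot]
          intro hle
          exact hT'n (fun t' ht' => le_trans (le_of_lt (hchild_lt t' ht')) hle)
        · intro K hle hne hEK
          rw [hroot] at hle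
          refine hKcl K (fun t' ht' => ⟨fun i => le_trans (hchild_le t' ht' i) (hle i), ?_⟩) hEK
          intro heq
          have h1 : (∑ i, t'.root i) < ∑ i, k i := hchild_lt t' ht'
          have h2 : (∑ i, k i) ≤ ∑ i, K i := Finset.sum_le_sum (fun i _ => hle i)
          rw [heq] at h1
          omega
        · show n * ((factors (DecompTree.node k ts)).countP
              (fun l => decide (η * Ω n < E l)) + c) ≤ 2 * T'
          have hcount : (factors (DecompTree.node k ts)).countP
              (fun l => decide (η * Ω n < E l))
              = ((ts.flatMap factors).countP fun l => decide (η * Ω n < E l)) := by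
            rw [hfac, List.countP_cons]
            simp [hcnt]
          rw [hcount]
          exact hmain
  termination_by sizeOf t
  decreasing_by
    have := List.sizeOf_lt_of_mem ht'
    simp only [DecompTree.node.sizeOf_spec]
    omega

end SiegelAux

open DecompTree in
/-- Siegel's counting lemma, abstract form: let `Ω` be nondecreasing with
`E k ≤ Ω |k|`, and suppose (Siegel's separation property) that any two nested
multiindices `k' < k` whose divisors both exceed `η Ω n` satisfy
`|k| - |k'| ≥ n`. Then the number `N_n(k)` of factors exceeding `η Ω n` in the
decomposition of `Δ_k` is `0` if `|k| ≤ n`, and at most `2|k|/n − 1` if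
`|k| > n`. -/
theorem stmt_18 (s : ℕ) (E : (Fin s → ℕ) → ℝ) (Ω : ℕ → ℝ) (η : ℝ)
    (hΩ1 : ∀ n, 2 ≤ n → 1 ≤ Ω n)
    (hΩmono : ∀ n n', 2 ≤ n → n ≤ n' → Ω n ≤ Ω n')
    (hη : 1 ≤ η)
    (hE : ∀ k : Fin s → ℕ, 2 ≤ ∑ i, k i → E k ≤ Ω (∑ i, k i))
    (hsep : ∀ n, 2 ≤ n → ∀ k k' : Fin s → ℕ, (∀ i, k' i ≤ k i) → k' ≠ k →
      η * Ω n < E k → η * Ω n < E k' → n ≤ (∑ i, k i) - (∑ i, k' i))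
    (t : DecompTree s) (ht : DecompTree.Valid t) (n : ℕ) (hn : 2 ≤ n) :
    ((∑ i, DecompTree.root t i) ≤ n →
      (DecompTree.factors t).countP (fun l => decide (η * Ω n < E l)) = 0) ∧
    (n < ∑ i, DecompTree.root t i →
      ((DecompTree.factors t).countP (fun l => decide (η * Ω n < E l)) : ℝ) ≤
        2 * (∑ i, DecompTree.root t i) / n - 1) := by
  obtain ⟨C, T, h1, h2, h3, h4, h5, h6⟩ :=
    siegel_key E Ω η n hn hΩ1 hΩmono hη hE (hsep n hn) t ht
  set N := (DecompTree.factors t).countP (fun l => decide (η * Ω n < E l)) with hN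
  constructor
  · intro hle
    have hT0 : T = 0 := h4 hle
    have : n * (N + C) = 0 := by omega
    rcases Nat.mul_eq_zero.1 this with h | h
    · omega
    · omega
  · intro hlt
    have hnat : n * (N + 1) ≤ 2 * ∑ i, DecompTree.root t i := by
      match C with
      | 0 =>
          have hT0 : T = 0 := h3 rfl
          have : n * (N + 0) = 0 := by omega
          have hN0 : N = 0 := by
            rcases Nat.mul_eq_zero.1 this with h | h
            · omega
            · omega
          rw [hN0]
          omega
      | (C + 1) =>
          calc n * (N + 1) ≤ n * (N + (C + 1)) := Nat.mul_le_mul_left n (by omega)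
            _ ≤ 2 * T := h6
            _ ≤ 2 * ∑ i, DecompTree.root t i := by omega
    have hn0 : (0:ℝ) < (n:ℝ) := by positivity
    have hcast : ((n * (N + 1) : ℕ) : ℝ) ≤ ((2 * ∑ i, DecompTree.root t i : ℕ) : ℝ) :=
      Nat.cast_le.2 hnat
    push_cast at hcast
    have hdiv : (N:ℝ) + 1 ≤ 2 * (∑ i, DecompTree.root t i : ℕ) / n := by
      rw [le_div_iff₀ hn0]
      push_cast
      nlinarith
    linarith
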